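/- Let (K, π, τ_K) be a real coisotropic quantum right subgroup of F and ρ_L a unitary left corepresentation of K on the inner product space V with orthonormal basis {e_i} (unitarity: τ_K(b_{ij}) = b_{ji}). Then for all A = Σ_i A_i⊗e_i and B = Σ_i B_i⊗e_i in ind_K^G(ρ_L), the element ⟨A,B⟩_R := Σ_i B_i A_i* belongs to B^π. -/

import Mathlib

open scoped TensorProduct
open Coalgebra

noncomputable section

variable {F : Type*} [Ring F] [HopfAlgebra ℂ F] [StarRing F] [StarModule ℂ F]
variable {K : Type*} [AddCommGroup K] [Module ℂ K] [Coalgebra ℂ K]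
variable {V : Type*} [AddCommGroup V] [Module ℂ V]

/-- The right quantum homogeneous space `B^π = {a | (id ⊗ π)(Δ a) = a ⊗ π(1)}`,
as a subspace of `F`. -/
def BpiR (π : F →ₗ[ℂ] K) : Submodule ℂ F :=
  LinearMap.ker ((LinearMap.lTensor F π ∘ₗ Coalgebra.comul) - (TensorProduct.mk ℂ F K).flip (π 1))

/-- The induced space `ind_K^G(ρ_L) = {A ∈ F ⊗ V | (R ⊗ id)A = (id ⊗ ρ_L)A}`,
where `R = (id ⊗ π) ∘ Δ`. -/
def indKR (π : F →ₗ[ℂ] K) (ρL : V →ₗ[ℂ] K ⊗[ℂ] V) : Submodule ℂ (F ⊗[ℂ] V) :=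
  LinearMap.ker ((TensorProduct.assoc ℂ F K V).toLinearMap ∘ₗ
      LinearMap.rTensor V (LinearMap.lTensor F π ∘ₗ Coalgebra.comul)
    - LinearMap.lTensor F ρL)

set_option linter.unusedSectionVars false

universe w

lemma sum_ulift_fin {α : Type*} {M : Type*} [AddCommMonoid M] (s : Finset α) (g : α → M) :
    ∑ i : ULift.{w} (Fin s.card), g (s.equivFin.symm i.down) = ∑ x ∈ s, g x :=
  calc ∑ i : ULift.{w} (Fin s.card), g (s.equivFin.symm i.down)
      = ∑ i : Fin s.card, g (s.equivFin.symm i) :=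
        Fintype.sum_equiv Equiv.ulift _ _ (fun _ => rfl)
    _ = ∑ x : {x // x ∈ s}, g x := Fintype.sum_equiv s.equivFin.symm _ _ (fun _ => rfl)
    _ = ∑ x ∈ s, g x := Finset.sum_coe_sort s g


/-- Reindex a `Coalgebra.Repr` to live at an arbitrary universe. -/
def reprULift {a : F} {κ : Type*} (r : Coalgebra.Repr ℂ a κ) :
    Coalgebra.Repr ℂ a (ULift.{w} (Fin r.index.card)) where
  index := Finset.univ
  left := fun i => r.left (r.index.equivFin.symm i.down)
  right := fun i => r.right (r.index.equivFin.symm i.down)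
  eq := by
    rw [← r.eq]
    exact sum_ulift_fin r.index (fun x => r.left x ⊗ₜ[ℂ] r.right x)

lemma comul_star_repr
    (hcomul_star : ∀ (a : F) (κ : Type w) (r : Coalgebra.Repr ℂ a κ),
      Coalgebra.comul (star a) = ∑ i ∈ r.index, star (r.left i) ⊗ₜ[ℂ] star (r.right i))
    {a : F} {κ : Type*} (r : Coalgebra.Repr ℂ a κ) :
    Coalgebra.comul (star a) = ∑ i ∈ r.index, star (r.left i) ⊗ₜ[ℂ] star (r.right i) := by
  rw [hcomul_star a _ (reprULift r)]
  exact sum_ulift_fin r.index (fun x => star (r.left x) ⊗ₜ[ℂ] star (r.right x))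

/-- `a ⊗ k ↦ star a ⊗ τK k` as an additive map. -/
def thetaK (τK : K → K)
    (hadd : ∀ x y : K, τK (x + y) = τK x + τK y)
    (hsmul : ∀ (c : ℂ) (x : K), τK (c • x) = (starRingEnd ℂ) c • τK x) :
    F ⊗[ℂ] K →+ F ⊗[ℂ] K :=
  TensorProduct.liftAddHom
    { toFun := fun a =>
        { toFun := fun k => star a ⊗ₜ[ℂ] τK k
          map_zero' := by
            have h0 : τK 0 = 0 := by simpa using hsmul 0 0
            simp [h0]
          map_add' := fun x y => by
            show star a ⊗ₜ[ℂ] τK (x + y) = star a ⊗ₜ[ℂ] τK x + star a ⊗ₜ[ℂ] τK y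
            rw [hadd]; exact TensorProduct.tmul_add _ _ _ }
      map_zero' := by ext k; simp
      map_add' := fun a b => by ext k; simp [TensorProduct.add_tmul] }
    (fun c a k => by
      show star (c • a) ⊗ₜ[ℂ] τK k = star a ⊗ₜ[ℂ] τK (c • k)
      rw [hsmul, star_smul, starRingEnd_apply, TensorProduct.smul_tmul])

@[simp] lemma thetaK_tmul (τK : K → K) (hadd) (hsmul) (a : F) (k : K) :
    thetaK (F := F) τK hadd hsmul (a ⊗ₜ[ℂ] k) = star a ⊗ₜ[ℂ] τK k := rfl

/-- `x ⊗ y ↦ star x ⊗ π (star y)` as an additive map. -/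
def thetaF (π : F →ₗ[ℂ] K) : F ⊗[ℂ] F →+ F ⊗[ℂ] K :=
  TensorProduct.liftAddHom
    { toFun := fun a =>
        { toFun := fun y => star a ⊗ₜ[ℂ] π (star y)
          map_zero' := by simp
          map_add' := fun x y => by
            show star a ⊗ₜ[ℂ] π (star (x + y)) = star a ⊗ₜ[ℂ] π (star x) + star a ⊗ₜ[ℂ] π (star y)
            rw [star_add, map_add]; exact TensorProduct.tmul_add _ _ _ }
      map_zero' := by ext k; simp
      map_add' := fun a b => by ext k; simp [TensorProduct.add_tmul] }
    (fun c a y => by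
      show star (c • a) ⊗ₜ[ℂ] π (star y) = star a ⊗ₜ[ℂ] π (star (c • y))
      rw [show star (c • y) = (starRingEnd ℂ) c • star y from star_smul c y,
        map_smul, star_smul, starRingEnd_apply, TensorProduct.smul_tmul])

@[simp] lemma thetaF_tmul (π : F →ₗ[ℂ] K) (a y : F) :
    thetaF π (a ⊗ₜ[ℂ] y) = star a ⊗ₜ[ℂ] π (star y) := rfl

/-- `a ⊗ k ↦ ∑ a₍₁₎ ⊗ act k a₍₂₎`. -/
def psiMap (act : K →ₗ[ℂ] F →ₗ[ℂ] K) : F ⊗[ℂ] K →ₗ[ℂ] F ⊗[ℂ] K :=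
  LinearMap.lTensor F (TensorProduct.lift act.flip) ∘ₗ
    (TensorProduct.assoc ℂ F F K).toLinearMap ∘ₗ LinearMap.rTensor K Coalgebra.comul

lemma psiMap_tmul (act : K →ₗ[ℂ] F →ₗ[ℂ] K) (a : F) {κ : Type*} (r : Coalgebra.Repr ℂ a κ) (k : K) :
    psiMap act (a ⊗ₜ[ℂ] k) = ∑ t ∈ r.index, r.left t ⊗ₜ[ℂ] act k (r.right t) := by
  simp only [psiMap, LinearMap.comp_apply, LinearMap.rTensor_tmul, LinearEquiv.coe_coe]
  rw [show Coalgebra.comul a = ∑ t ∈ r.index, r.left t ⊗ₜ[ℂ] r.right t from r.eq.symm]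
  rw [TensorProduct.sum_tmul, map_sum, map_sum]
  refine Finset.sum_congr rfl fun t _ => ?_
  simp [TensorProduct.assoc_tmul, TensorProduct.lift.tmul]

set_option linter.unusedSectionVars false

lemma key_lemma {ι : Type*} [Fintype ι]
    (hcomul_star : ∀ (a : F) (κ : Type w) (r : Coalgebra.Repr ℂ a κ),
      Coalgebra.comul (star a) = ∑ i ∈ r.index, star (r.left i) ⊗ₜ[ℂ] star (r.right i))
    (π : F →ₗ[ℂ] K)
    (act : K →ₗ[ℂ] F →ₗ[ℂ] K)
    (hact_π : ∀ a b : F, act (π a) b = π (a * b))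
    (τK : K → K)
    (hτK_add : ∀ x y : K, τK (x + y) = τK x + τK y)
    (hτK_smul : ∀ (c : ℂ) (x : K), τK (c • x) = (starRingEnd ℂ) c • τK x)
    (hτK_π : ∀ a : F, τK (π a) = π (star (HopfAlgebra.antipode (R := ℂ) a)))
    (bMat : ι → ι → K)
    (hunit : ∀ i j : ι, τK (bMat i j) = bMat j i)
    (Acomp : ι → F)
    (hA : ∀ i : ι, LinearMap.lTensor F π (Coalgebra.comul (Acomp i))
      = ∑ j : ι, Acomp j ⊗ₜ[ℂ] bMat i j)
    (rA : (i : ι) → Coalgebra.Repr ℂ (Acomp i) (F × F)) (j : ι) :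
    (∑ i : ι, ∑ t ∈ (rA i).index,
        star ((rA i).left t) ⊗ₜ[ℂ] act (bMat i j) (star ((rA i).right t)))
      = star (Acomp j) ⊗ₜ[ℂ] π 1 := by
  classical
  have h2 : ∀ i, LinearMap.lTensor F π (Coalgebra.comul (Acomp i))
      = ∑ t ∈ (rA i).index, (rA i).left t ⊗ₜ[ℂ] π ((rA i).right t) := by
    intro i
    rw [show Coalgebra.comul (Acomp i) = ∑ t ∈ (rA i).index, (rA i).left t ⊗ₜ[ℂ] (rA i).right t
      from (rA i).eq.symm, map_sum]
    simp
  have stepA : (∑ i : ι, star (Acomp i) ⊗ₜ[ℂ] bMat i j)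
      = ∑ t ∈ (rA j).index, star ((rA j).left t)
          ⊗ₜ[ℂ] π (star (HopfAlgebra.antipode (R := ℂ) ((rA j).right t))) := by
    have h1 := (hA j).symm.trans (h2 j)
    have h3 := congrArg (thetaK (F := F) τK hτK_add hτK_smul) h1
    rw [map_sum, map_sum] at h3
    simp only [thetaK_tmul] at h3
    calc ∑ i : ι, star (Acomp i) ⊗ₜ[ℂ] bMat i j
        = ∑ i : ι, star (Acomp i) ⊗ₜ[ℂ] τK (bMat j i) :=
          Finset.sum_congr rfl fun i _ => by rw [hunit]
      _ = ∑ t ∈ (rA j).index, star ((rA j).left t) ⊗ₜ[ℂ] τK (π ((rA j).right t)) := h3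
      _ = _ := Finset.sum_congr rfl fun t _ => by rw [hτK_π]
  have LHSpsi : (∑ i : ι, ∑ t ∈ (rA i).index,
      star ((rA i).left t) ⊗ₜ[ℂ] act (bMat i j) (star ((rA i).right t)))
      = psiMap act (∑ i : ι, star (Acomp i) ⊗ₜ[ℂ] bMat i j) := by
    rw [map_sum]
    refine Finset.sum_congr rfl fun i _ => ?_
    exact (psiMap_tmul act (star (Acomp i))
      ⟨(rA i).index, fun t => star ((rA i).left t), fun t => star ((rA i).right t),
        (comul_star_repr hcomul_star (rA i)).symm⟩ (bMat i j)).symm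
  set rL : (t : F × F) → Coalgebra.Repr ℂ ((rA j).left t) (F × F) := fun t => ℛ ℂ _ with hrL
  rw [LHSpsi, stepA, map_sum]
  have step2 : ∀ t ∈ (rA j).index,
      psiMap act (star ((rA j).left t)
          ⊗ₜ[ℂ] π (star (HopfAlgebra.antipode (R := ℂ) ((rA j).right t))))
      = ∑ s ∈ (rL t).index, star ((rL t).left s)
          ⊗ₜ[ℂ] π (star ((rL t).right s * HopfAlgebra.antipode (R := ℂ) ((rA j).right t))) := by
    intro t _
    rw [psiMap_tmul act _
      ⟨(rL t).index, fun s => star ((rL t).left s), fun s => star ((rL t).right s),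
        (comul_star_repr hcomul_star (rL t)).symm⟩]
    refine Finset.sum_congr rfl fun s _ => ?_
    rw [hact_π, star_mul]
  rw [Finset.sum_congr rfl step2]
  have stepE : ∑ t ∈ (rA j).index, ∑ s ∈ (rL t).index,
      (rL t).left s ⊗ₜ[ℂ] ((rL t).right s * HopfAlgebra.antipode (R := ℂ) ((rA j).right t))
      = Acomp j ⊗ₜ[ℂ] (1 : F) := by
    have hco := Coalgebra.sum_tmul_tmul_eq (rA j) (fun t => rL t)
      (fun t => ℛ ℂ ((rA j).right t))
    have h4 := congrArg (LinearMap.lTensor F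
      (LinearMap.mul' ℂ F ∘ₗ LinearMap.lTensor F (HopfAlgebra.antipode (R := ℂ)))) hco
    simp only [map_sum, LinearMap.lTensor_tmul, LinearMap.comp_apply,
      LinearMap.mul'_apply] at h4
    rw [h4]
    calc ∑ t ∈ (rA j).index, ∑ u ∈ (ℛ ℂ ((rA j).right t)).index,
          (rA j).left t ⊗ₜ[ℂ] ((ℛ ℂ ((rA j).right t)).left u *
            HopfAlgebra.antipode (R := ℂ) ((ℛ ℂ ((rA j).right t)).right u))
        = ∑ t ∈ (rA j).index,
            (rA j).left t ⊗ₜ[ℂ] algebraMap ℂ F (Coalgebra.counit ((rA j).right t)) := by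
          refine Finset.sum_congr rfl fun t _ => ?_
          rw [← TensorProduct.tmul_sum, HopfAlgebra.sum_mul_antipode_eq_algebraMap_counit]
      _ = ∑ t ∈ (rA j).index,
            (Coalgebra.counit ((rA j).right t) : ℂ) • ((rA j).left t ⊗ₜ[ℂ] (1 : F)) := by
          refine Finset.sum_congr rfl fun t _ => ?_
          rw [Algebra.algebraMap_eq_smul_one, TensorProduct.tmul_smul]
      _ = (∑ t ∈ (rA j).index, (Coalgebra.counit ((rA j).right t) : ℂ) • (rA j).left t)
            ⊗ₜ[ℂ] (1 : F) := by
          rw [TensorProduct.sum_tmul]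
          exact Finset.sum_congr rfl fun t _ => (TensorProduct.smul_tmul' _ _ _).symm
      _ = Acomp j ⊗ₜ[ℂ] (1 : F) := by
          congr 1
          have h5 := Coalgebra.sum_tmul_counit_eq (R := ℂ) (rA j)
          have h6 := congrArg (TensorProduct.rid ℂ F) h5
          rw [map_sum] at h6
          simpa [TensorProduct.rid_tmul] using h6
  have h7 := congrArg (thetaF π) stepE
  rw [map_sum] at h7
  simp only [map_sum, thetaF_tmul] at h7
  rw [h7]
  rw [star_one]


/-- For a unitary left corepresentation `ρ_L` of a right coisotropic quantum subgroup and
`A, B ∈ ind_K^G(ρ_L)`, the element `⟨A,B⟩_R = Σ_i B_i A_i*` lies in `B^π`. -/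
theorem statement16 {ι : Type*} [Fintype ι]
    (hcomul_star : ∀ (a : F) (κ : Type*) (r : Coalgebra.Repr ℂ a κ),
      Coalgebra.comul (star a) = ∑ i ∈ r.index, star (r.left i) ⊗ₜ[ℂ] star (r.right i))
    (hcounit_star : ∀ a : F, (Coalgebra.counit (star a) : ℂ) = starRingEnd ℂ (Coalgebra.counit a))
    (hSbij : Function.Bijective (HopfAlgebra.antipode (R := ℂ) (A := F)))
    (π : F →ₗ[ℂ] K) (hπsurj : Function.Surjective π)
    (hπcomul : ∀ a : F, Coalgebra.comul (π a) = TensorProduct.map π π (Coalgebra.comul a))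
    (hπcounit : ∀ a : F, (Coalgebra.counit (π a) : ℂ) = (Coalgebra.counit a : ℂ))
    (act : K →ₗ[ℂ] F →ₗ[ℂ] K)
    (hact_one : ∀ k : K, act k 1 = k)
    (hact_mul : ∀ (k : K) (a b : F), act k (a * b) = act (act k a) b)
    (hact_π : ∀ a b : F, act (π a) b = π (a * b))
    (τK : K → K)
    (hτK_add : ∀ x y : K, τK (x + y) = τK x + τK y)
    (hτK_smul : ∀ (c : ℂ) (x : K), τK (c • x) = (starRingEnd ℂ) c • τK x)
    (hτK_π : ∀ a : F, τK (π a) = π (star (HopfAlgebra.antipode (R := ℂ) a)))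
    (Sinv : F →ₗ[ℂ] F)
    (hSinv₁ : ∀ a : F, Sinv (HopfAlgebra.antipode (R := ℂ) a) = a)
    (hSinv₂ : ∀ a : F, HopfAlgebra.antipode (R := ℂ) (Sinv a) = a)
    (ρL : V →ₗ[ℂ] K ⊗[ℂ] V)
    (hρ_counit : ∀ v : V,
      (TensorProduct.lid ℂ V) (LinearMap.rTensor V Coalgebra.counit (ρL v)) = v)
    (hρ_coassoc : ∀ v : V, (TensorProduct.assoc ℂ K K V).symm (LinearMap.lTensor K ρL (ρL v))
        = LinearMap.rTensor V Coalgebra.comul (ρL v))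
    (b : Module.Basis ι ℂ V) (bMat : ι → ι → K)
    (hρmat : ∀ i : ι, ρL (b i) = ∑ j : ι, bMat i j ⊗ₜ[ℂ] b j)
    (hunit : ∀ i j : ι, τK (bMat i j) = bMat j i)
    (Acomp Bcomp : ι → F)
    (hA : ∀ i : ι, LinearMap.lTensor F π (Coalgebra.comul (Acomp i))
      = ∑ j : ι, Acomp j ⊗ₜ[ℂ] bMat i j)
    (hB : ∀ i : ι, LinearMap.lTensor F π (Coalgebra.comul (Bcomp i))
      = ∑ j : ι, Bcomp j ⊗ₜ[ℂ] bMat i j) :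
    (∑ i : ι, Bcomp i * star (Acomp i)) ∈ BpiR π := by
  classical
  rw [BpiR, LinearMap.mem_ker, LinearMap.sub_apply, LinearMap.comp_apply, sub_eq_zero]
  set rA : (i : ι) → Coalgebra.Repr ℂ (Acomp i) (F × F) := fun i => ℛ ℂ (Acomp i) with hrA
  set rB : (i : ι) → Coalgebra.Repr ℂ (Bcomp i) (F × F) := fun i => ℛ ℂ (Bcomp i) with hrB
  have key := key_lemma hcomul_star π act hact_π τK hτK_add hτK_smul hτK_π bMat hunit
    Acomp hA rA
  have hBi : ∀ i, LinearMap.lTensor F π (Coalgebra.comul (Bcomp i))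
      = ∑ s ∈ (rB i).index, (rB i).left s ⊗ₜ[ℂ] π ((rB i).right s) := by
    intro i
    rw [show Coalgebra.comul (Bcomp i) = ∑ s ∈ (rB i).index, (rB i).left s ⊗ₜ[ℂ] (rB i).right s
      from (rB i).eq.symm, map_sum]
    simp
  calc LinearMap.lTensor F π (Coalgebra.comul (∑ i : ι, Bcomp i * star (Acomp i)))
      = ∑ i : ι, LinearMap.lTensor F π (Coalgebra.comul (Bcomp i) *
          Coalgebra.comul (star (Acomp i))) := by
        rw [map_sum, map_sum]
        exact Finset.sum_congr rfl fun i _ => by rw [Bialgebra.comul_mul]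
    _ = ∑ i : ι, ∑ s ∈ (rB i).index, ∑ t ∈ (rA i).index,
          ((rB i).left s * star ((rA i).left t))
            ⊗ₜ[ℂ] act (π ((rB i).right s)) (star ((rA i).right t)) := by
        refine Finset.sum_congr rfl fun i _ => ?_
        rw [show Coalgebra.comul (Bcomp i)
            = ∑ s ∈ (rB i).index, (rB i).left s ⊗ₜ[ℂ] (rB i).right s from (rB i).eq.symm,
          comul_star_repr hcomul_star (rA i), Finset.sum_mul_sum, map_sum]
        refine Finset.sum_congr rfl fun s _ => ?_
        rw [map_sum]
        refine Finset.sum_congr rfl fun t _ => ?_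
        rw [Algebra.TensorProduct.tmul_mul_tmul, LinearMap.lTensor_tmul, hact_π]
    _ = ∑ i : ι, ∑ t ∈ (rA i).index,
          (TensorProduct.map (LinearMap.mulRight ℂ (star ((rA i).left t)))
            (act.flip (star ((rA i).right t))))
            (LinearMap.lTensor F π (Coalgebra.comul (Bcomp i))) := by
        refine Finset.sum_congr rfl fun i _ => ?_
        rw [Finset.sum_comm]
        refine Finset.sum_congr rfl fun t _ => ?_
        rw [hBi i, map_sum]
        refine Finset.sum_congr rfl fun s _ => ?_
        simp [TensorProduct.map_tmul]
    _ = ∑ i : ι, ∑ t ∈ (rA i).index, ∑ j : ι,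
          (Bcomp j * star ((rA i).left t)) ⊗ₜ[ℂ] act (bMat i j) (star ((rA i).right t)) := by
        refine Finset.sum_congr rfl fun i _ => Finset.sum_congr rfl fun t _ => ?_
        rw [hB i, map_sum]
        refine Finset.sum_congr rfl fun j _ => ?_
        simp [TensorProduct.map_tmul]
    _ = ∑ i : ι, ∑ j : ι, ∑ t ∈ (rA i).index,
          (Bcomp j * star ((rA i).left t)) ⊗ₜ[ℂ] act (bMat i j) (star ((rA i).right t)) :=
        Finset.sum_congr rfl fun i _ => Finset.sum_comm
    _ = ∑ j : ι, ∑ i : ι, ∑ t ∈ (rA i).index,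
          (Bcomp j * star ((rA i).left t)) ⊗ₜ[ℂ] act (bMat i j) (star ((rA i).right t)) :=
        Finset.sum_comm
    _ = ∑ j : ι, LinearMap.rTensor K (LinearMap.mulLeft ℂ (Bcomp j))
          (∑ i : ι, ∑ t ∈ (rA i).index,
            star ((rA i).left t) ⊗ₜ[ℂ] act (bMat i j) (star ((rA i).right t))) := by
        refine Finset.sum_congr rfl fun j _ => ?_
        rw [map_sum]
        refine Finset.sum_congr rfl fun i _ => ?_
        rw [map_sum]
        exact Finset.sum_congr rfl fun t _ => by simp
    _ = ∑ j : ι, LinearMap.rTensor K (LinearMap.mulLeft ℂ (Bcomp j))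
          (star (Acomp j) ⊗ₜ[ℂ] π 1) := by
        exact Finset.sum_congr rfl fun j _ => by rw [key j]
    _ = ∑ j : ι, (Bcomp j * star (Acomp j)) ⊗ₜ[ℂ] π 1 := by
        exact Finset.sum_congr rfl fun j _ => by simp
    _ = (∑ j : ι, Bcomp j * star (Acomp j)) ⊗ₜ[ℂ] π 1 := by
        rw [TensorProduct.sum_tmul]
    _ = ((TensorProduct.mk ℂ F K).flip (π 1)) (∑ i : ι, Bcomp i * star (Acomp i)) := rfl
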